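/- arXiv:1406.4170 — 2 statements merged into one kernel-verified Lean document; each statement's English description precedes it below -/
import Mathlib

section
/- Let G be a graph with Godsil-McKay switching set X and switched graph G'. The multiset {λ_G(x,y) : x,y ∉ X} of numbers of common neighbors of pairs of vertices outside X is unchanged by switching, i.e., λ_{G'}(x,y) = λ_G(x,y) for all x,y ∉ X. -/
open Finset
open scoped Classical

variable {V : Type*}

/-- `y` has exactly half of the vertices of `X` as neighbours in `G`. -/
def halfIn (G : SimpleGraph V) (X : Finset V) (y : V) : Prop :=
  2 * (X.filter (G.Adj y)).card = X.card

/-- A Godsil-McKay switching set: `X` induces a regular subgraph, and every vertex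
outside `X` has `0`, `|X|/2` or `|X|` neighbours in `X`. -/
def IsGMSwitchingSet (G : SimpleGraph V) (X : Finset V) : Prop :=
  (∃ k, ∀ x ∈ X, (X.filter (G.Adj x)).card = k) ∧
    ∀ y ∉ X, (X.filter (G.Adj y)).card = 0 ∨ halfIn G X y ∨
      (X.filter (G.Adj y)).card = X.card

/-- The graph obtained from `G` by Godsil-McKay switching with respect to `X`:
for each vertex `y ∉ X` having exactly `|X|/2` neighbours in `X`, the edges from `y`
to `X` are replaced by the edges from `y` to the other `|X|/2` vertices of `X`. -/
noncomputable def GMswitch (G : SimpleGraph V) (X : Finset V) : SimpleGraph V where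
  Adj u v :=
    if u ∈ X ↔ v ∈ X then G.Adj u v
    else if halfIn G X (if u ∈ X then v else u) then ¬ G.Adj u v else G.Adj u v
  symm := by
    constructor
    intro u v h
    beta_reduce at h ⊢
    by_cases hm : (u ∈ X ↔ v ∈ X)
    · rw [if_pos hm] at h
      rw [if_pos hm.symm]
      exact h.symm
    · have hm' : ¬ (v ∈ X ↔ u ∈ X) := fun hh => hm hh.symm
      rw [if_neg hm] at h
      rw [if_neg hm']
      have he : (if v ∈ X then u else v) = (if u ∈ X then v else u) := by
        by_cases hu : u ∈ X <;> by_cases hv : v ∈ X <;> simp [hu, hv] at hm ⊢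
      rw [he]
      by_cases hc : halfIn G X (if u ∈ X then v else u)
      · rw [if_pos hc] at h ⊢
        exact fun ha => h ha.symm
      · rw [if_neg hc] at h ⊢
        exact h.symm
  loopless := by
    constructor
    intro u h
    beta_reduce at h
    rw [if_pos Iff.rfl] at h
    exact G.irrefl h

/-- `lam G x y` is the number of common neighbours of `x` and `y` in `G`. -/
noncomputable def lam [Fintype V] (G : SimpleGraph V) (x y : V) : ℕ :=
  (univ.filter fun z => G.Adj x z ∧ G.Adj y z).card


/-- The number of common neighbours of two vertices outside the switching set is
unchanged by Godsil-McKay switching. -/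
theorem lam_outside_unchanged
    {V : Type*} [Fintype V] [DecidableEq V]
    (G : SimpleGraph V) (X : Finset V) (hX : IsGMSwitchingSet G X) :
    ∀ x ∉ X, ∀ y ∉ X, lam (GMswitch G X) x y = lam G x y := by

  intro x hx y hy
  classical
  -- adjacency description of the switched graph for our fixed x, y
  have hadj : ∀ w ∉ X, ∀ z, (GMswitch G X).Adj w z ↔
      (if z ∈ X then (if halfIn G X w then ¬ G.Adj w z else G.Adj w z) else G.Adj w z) := by
    intro w hw z
    simp only [GMswitch]
    by_cases hz : z ∈ X
    · have hm : ¬ (w ∈ X ↔ z ∈ X) := by tauto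
      rw [if_neg hm, if_neg hw, if_pos hz]
    · have hm : (w ∈ X ↔ z ∈ X) := by tauto
      rw [if_pos hm, if_neg hz]
  -- split a common-neighbour count into the part inside X and outside X
  have hsplit : ∀ (H : SimpleGraph V), lam H x y =
      (X.filter (fun z => H.Adj x z ∧ H.Adj y z)).card +
      ((univ.filter (fun z => H.Adj x z ∧ H.Adj y z)).filter (fun z => z ∉ X)).card := by
    intro H
    rw [lam]
    rw [← Finset.card_filter_add_card_filter_not (p := fun z => z ∈ X)]
    congr 1
    congr 1
    ext z
    simp [and_comm]
  rw [hsplit, hsplit]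
  -- outside parts are equal
  have hout : ((univ.filter (fun z => (GMswitch G X).Adj x z ∧ (GMswitch G X).Adj y z)).filter
      (fun z => z ∉ X)) =
      ((univ.filter (fun z => G.Adj x z ∧ G.Adj y z)).filter (fun z => z ∉ X)) := by
    ext z
    simp only [Finset.mem_filter, Finset.mem_univ, true_and]
    constructor
    · rintro ⟨⟨h1, h2⟩, hz⟩
      rw [hadj x hx z, if_neg hz] at h1
      rw [hadj y hy z, if_neg hz] at h2
      exact ⟨⟨h1, h2⟩, hz⟩
    · rintro ⟨⟨h1, h2⟩, hz⟩
      refine ⟨⟨?_, ?_⟩, hz⟩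
      · rw [hadj x hx z, if_neg hz]; exact h1
      · rw [hadj y hy z, if_neg hz]; exact h2
  rw [hout]
  congr 1
  -- inside parts
  set A := X.filter (fun z => G.Adj x z) with hA
  set B := X.filter (fun z => G.Adj y z) with hB
  have hAX : A ⊆ X := Finset.filter_subset _ _
  have hBX : B ⊆ X := Finset.filter_subset _ _
  have hG : X.filter (fun z => G.Adj x z ∧ G.Adj y z) = A ∩ B := by
    rw [hA, hB, ← Finset.filter_and]
  have hcond : ∀ z ∈ X, ((GMswitch G X).Adj x z ↔
      (if halfIn G X x then ¬ G.Adj x z else G.Adj x z)) ∧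
      ((GMswitch G X).Adj y z ↔ (if halfIn G X y then ¬ G.Adj y z else G.Adj y z)) := by
    intro z hz
    constructor
    · rw [hadj x hx z, if_pos hz]
    · rw [hadj y hy z, if_pos hz]
  have hcAB := Finset.card_inter_add_card_union A B
  by_cases hxh : halfIn G X x <;> by_cases hyh : halfIn G X y
  · -- both flipped
    have h1 : X.filter (fun z => (GMswitch G X).Adj x z ∧ (GMswitch G X).Adj y z)
        = X \ (A ∪ B) := by
      ext z
      simp only [Finset.mem_filter, Finset.mem_sdiff, Finset.mem_union, hA, hB]
      constructor
      · rintro ⟨hz, h1, h2⟩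
        rw [(hcond z hz).1, if_pos hxh] at h1
        rw [(hcond z hz).2, if_pos hyh] at h2
        exact ⟨hz, by tauto⟩
      · rintro ⟨hz, hn⟩
        refine ⟨hz, ?_, ?_⟩
        · rw [(hcond z hz).1, if_pos hxh]; tauto
        · rw [(hcond z hz).2, if_pos hyh]; tauto
    rw [h1, hG]
    have hsub : A ∪ B ⊆ X := Finset.union_subset hAX hBX
    have := Finset.card_sdiff_of_subset hsub
    have hux := Finset.card_le_card hsub
    unfold halfIn at hxh hyh
    rw [← hA] at hxh
    rw [← hB] at hyh
    omega
  · -- x flipped, y not halfIn: B = ∅ or B = X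
    have h1 : X.filter (fun z => (GMswitch G X).Adj x z ∧ (GMswitch G X).Adj y z)
        = (X \ A) ∩ B := by
      ext z
      simp only [Finset.mem_filter, Finset.mem_sdiff, Finset.mem_inter, hA, hB]
      constructor
      · rintro ⟨hz, h1, h2⟩
        rw [(hcond z hz).1, if_pos hxh] at h1
        rw [(hcond z hz).2, if_neg hyh] at h2
        tauto
      · rintro ⟨⟨hz, hna⟩, hz2, hb⟩
        refine ⟨hz, ?_, ?_⟩
        · rw [(hcond z hz).1, if_pos hxh]; tauto
        · rw [(hcond z hz).2, if_neg hyh]; exact hb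
    rw [h1, hG]
    rcases hX.2 y hy with h0 | hh | hfull
    · have hB0 : B = ∅ := Finset.card_eq_zero.mp h0
      rw [hB0]; simp
    · exact absurd hh hyh
    · have hBX' : B = X := Finset.eq_of_subset_of_card_le hBX (le_of_eq hfull.symm)
      rw [hBX', Finset.inter_eq_left.mpr (Finset.sdiff_subset),
        Finset.inter_eq_left.mpr hAX, Finset.card_sdiff_of_subset hAX]
      unfold halfIn at hxh
      rw [← hA] at hxh
      have := Finset.card_le_card hAX
      omega
  · -- y flipped, x not
    have h1 : X.filter (fun z => (GMswitch G X).Adj x z ∧ (GMswitch G X).Adj y z)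
        = A ∩ (X \ B) := by
      ext z
      simp only [Finset.mem_filter, Finset.mem_sdiff, Finset.mem_inter, hA, hB]
      constructor
      · rintro ⟨hz, h1, h2⟩
        rw [(hcond z hz).1, if_neg hxh] at h1
        rw [(hcond z hz).2, if_pos hyh] at h2
        tauto
      · rintro ⟨⟨hz2, ha⟩, hz, hnb⟩
        refine ⟨hz, ?_, ?_⟩
        · rw [(hcond z hz).1, if_neg hxh]; exact ha
        · rw [(hcond z hz).2, if_pos hyh]; tauto
    rw [h1, hG]
    rcases hX.2 x hx with h0 | hh | hfull
    · have hA0 : A = ∅ := Finset.card_eq_zero.mp h0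
      rw [hA0]; simp
    · exact absurd hh hxh
    · have hAX' : A = X := Finset.eq_of_subset_of_card_le hAX (le_of_eq hfull.symm)
      rw [hAX', Finset.inter_eq_right.mpr (Finset.sdiff_subset),
        Finset.inter_eq_right.mpr hBX, Finset.card_sdiff_of_subset hBX]
      unfold halfIn at hyh
      rw [← hB] at hyh
      have := Finset.card_le_card hBX
      omega
  · -- neither flipped
    have h1 : X.filter (fun z => (GMswitch G X).Adj x z ∧ (GMswitch G X).Adj y z)
        = A ∩ B := by
      ext z
      simp only [Finset.mem_filter, Finset.mem_inter, hA, hB]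
      constructor
      · rintro ⟨hz, h1, h2⟩
        rw [(hcond z hz).1, if_neg hxh] at h1
        rw [(hcond z hz).2, if_neg hyh] at h2
        tauto
      · rintro ⟨⟨hz, ha⟩, hz2, hb⟩
        refine ⟨hz, ?_, ?_⟩
        · rw [(hcond z hz).1, if_neg hxh]; exact ha
        · rw [(hcond z hz).2, if_neg hyh]; exact hb
    rw [h1, hG]
end

section
/- Let G be a graph with Godsil-McKay switching set X, with adjacency matrix A = [[B, M],[Mᵀ, C]], switched matrix A' = [[B, M'],[M'ᵀ, C]], and let A'' be obtained from A' by additionally complementing the corresponding columns (equivalently, A'' = [[B'', M'],[M'ᵀ, C]] where rows of A indexed by X are switched). Then A''(A'')ᵀ = A'(A')ᵀ; i.e., the matrices A' and A'' have the same Gram matrix of rows. -/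
open Finset Matrix
open scoped Classical

variable {V : Type*}

/-- The block row `[N J O]` as a single matrix. -/
def rowBlocks {ι κ₁ κ₂ κ₃ : Type*} (N : Matrix ι κ₁ ℝ) :
    Matrix ι (κ₁ ⊕ κ₂ ⊕ κ₃) ℝ :=
  Matrix.of fun x y => Sum.elim (N x) (Sum.elim (fun _ => 1) (fun _ => 0)) y

/-- Key identity for Theorem 5: with `A' = [[B,M'],[M'ᵀ,C]]` and `A''` obtained from
`A'` by additionally switching the columns corresponding to `X` (i.e. `A''` is `A` with
its `X`-rows switched), we have `A''(A'')ᵀ = A'(A')ᵀ`.  Here `M = [N J O]`,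
`M' = [J-N J O]`, the columns of `N` sum to `|X|/2`, and either `X` is a coclique
(`B = 0`, and the `X`-rows of the `B`-block are unchanged) or `B` has row sums `|X|/2`
(and the `B`-block is complemented as well). -/
theorem switched_rows_same_gram
    {ι κ₁ κ₂ κ₃ : Type*} [Fintype ι] [Fintype κ₁] [Fintype κ₂] [Fintype κ₃]
    (B Bs : Matrix ι ι ℝ) (C : Matrix (κ₁ ⊕ κ₂ ⊕ κ₃) (κ₁ ⊕ κ₂ ⊕ κ₃) ℝ)
    (N : Matrix ι κ₁ ℝ)
    (hBsym : Bᵀ = B) (hCsym : Cᵀ = C)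
    (hN01 : ∀ x y, N x y = 0 ∨ N x y = 1)
    (hNcol : ∀ y, ∑ x, N x y = (Fintype.card ι : ℝ) / 2)
    (hcase : (B = 0 ∧ Bs = B) ∨
      ((∀ x, ∑ y, B x y = (Fintype.card ι : ℝ) / 2) ∧
        Bs = Matrix.of (fun _ _ => 1) - B)) :
    Matrix.fromBlocks Bs (rowBlocks (Matrix.of (fun _ _ => 1) - N))
        (rowBlocks (κ₂ := κ₂) (κ₃ := κ₃) N)ᵀ C *
      (Matrix.fromBlocks Bs (rowBlocks (Matrix.of (fun _ _ => 1) - N))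
        (rowBlocks (κ₂ := κ₂) (κ₃ := κ₃) N)ᵀ C)ᵀ =
    Matrix.fromBlocks B (rowBlocks (Matrix.of (fun _ _ => 1) - N))
        (rowBlocks (κ₂ := κ₂) (κ₃ := κ₃) (Matrix.of (fun _ _ => 1) - N))ᵀ C *
      (Matrix.fromBlocks B (rowBlocks (Matrix.of (fun _ _ => 1) - N))
        (rowBlocks (κ₂ := κ₂) (κ₃ := κ₃) (Matrix.of (fun _ _ => 1) - N))ᵀ C)ᵀ := by
  classical
  set c : ℝ := (Fintype.card ι : ℝ) with hc
  set M : Matrix ι (κ₁ ⊕ κ₂ ⊕ κ₃) ℝ := rowBlocks N with hM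
  set M' : Matrix ι (κ₁ ⊕ κ₂ ⊕ κ₃) ℝ :=
    rowBlocks (Matrix.of (fun _ _ => 1) - N) with hM'
  have hB : ∀ a b, B a b = B b a := fun a b => congrFun (congrFun hBsym b) a
  have hBcol : (∀ x, ∑ y, B x y = c / 2) → ∀ y, ∑ x, B x y = c / 2 := by
    intro hrow y
    simp_rw [fun x => hB x y]
    exact hrow y
  -- L2 : Bs * M = B * M'
  have hL2 : Bs * M = B * M' := by
    ext x y
    rcases hcase with ⟨hB0, hBs⟩ | ⟨hBrow, hBs⟩
    · subst hBs; subst hB0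
      simp [Matrix.mul_apply]
    · subst hBs
      cases y with
      | inl y₁ =>
        simp only [Matrix.mul_apply, hM, hM', rowBlocks, Matrix.of_apply, Sum.elim_inl,
          Matrix.sub_apply, sub_mul, mul_sub, Finset.sum_sub_distrib, mul_one, one_mul]
        rw [hNcol y₁, hBrow x]
      | inr y₂ =>
        cases y₂ with
        | inl y₂ =>
          simp only [Matrix.mul_apply, hM, hM', rowBlocks, Matrix.of_apply, Sum.elim_inr,
            Sum.elim_inl, Matrix.sub_apply, sub_mul, mul_one,
            Finset.sum_sub_distrib, Finset.sum_const, Finset.card_univ, nsmul_eq_mul, mul_one]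
          rw [hBrow x, ← hc]
          ring
        | inr y₃ =>
          simp [Matrix.mul_apply, hM, hM', rowBlocks]
  have hBs_symm : Bsᵀ = Bs := by
    rcases hcase with ⟨hB0, hBs⟩ | ⟨hBrow, hBs⟩
    · rw [hBs, hBsym]
    · rw [hBs]; ext x y
      simp only [Matrix.transpose_apply, Matrix.sub_apply, Matrix.of_apply]
      rw [hB y x]
  have hL1 : Bs * Bsᵀ = B * Bᵀ := by
    rw [hBs_symm, hBsym]
    ext x y
    rcases hcase with ⟨hB0, hBs⟩ | ⟨hBrow, hBs⟩
    · rw [hBs]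
    · subst hBs
      simp only [Matrix.mul_apply, Matrix.sub_apply, Matrix.of_apply, sub_mul, mul_sub,
        one_mul, mul_one, Finset.sum_sub_distrib, Finset.sum_const, Finset.card_univ,
        nsmul_eq_mul, mul_one]
      rw [hBrow x, hBcol hBrow y, ← hc]
      ring
  have hL3 : Mᵀ * Bsᵀ = M'ᵀ * Bᵀ := by
    have := congrArg Matrix.transpose hL2
    simpa [Matrix.transpose_mul] using this
  have hL4 : Mᵀ * M = M'ᵀ * M' := by
    ext z w
    cases z with
    | inl z₁ =>
      cases w with
      | inl w₁ =>
        simp only [Matrix.mul_apply, Matrix.transpose_apply, hM, hM', rowBlocks,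
          Matrix.of_apply, Sum.elim_inl, Matrix.sub_apply, sub_mul, mul_sub, one_mul,
          mul_one, Finset.sum_sub_distrib, Finset.sum_const, Finset.card_univ,
          nsmul_eq_mul, mul_one]
        rw [hNcol z₁, hNcol w₁, ← hc]
        ring
      | inr w₂ =>
        cases w₂ with
        | inl w₂ =>
          simp only [Matrix.mul_apply, Matrix.transpose_apply, hM, hM', rowBlocks,
            Matrix.of_apply, Sum.elim_inl, Sum.elim_inr, Matrix.sub_apply, sub_mul,
            mul_one, Finset.sum_sub_distrib, Finset.sum_const, Finset.card_univ,
            nsmul_eq_mul, mul_one]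
          rw [hNcol z₁, ← hc]
          ring
        | inr w₃ =>
          simp [Matrix.mul_apply, hM, hM', rowBlocks]
    | inr z₂ =>
      cases z₂ with
      | inl z₂ =>
        cases w with
        | inl w₁ =>
          simp only [Matrix.mul_apply, Matrix.transpose_apply, hM, hM', rowBlocks,
            Matrix.of_apply, Sum.elim_inl, Sum.elim_inr, Matrix.sub_apply, one_mul,
            mul_sub, Finset.sum_sub_distrib, Finset.sum_const, Finset.card_univ,
            nsmul_eq_mul, mul_one]
          rw [hNcol w₁, ← hc]
          ring
        | inr w₂ =>
          cases w₂ with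
          | inl w₂ => simp [Matrix.mul_apply, hM, hM', rowBlocks]
          | inr w₃ => simp [Matrix.mul_apply, hM, hM', rowBlocks]
      | inr z₃ =>
        simp [Matrix.mul_apply, hM, hM', rowBlocks]
  rw [Matrix.fromBlocks_transpose, Matrix.fromBlocks_transpose,
    Matrix.fromBlocks_multiply, Matrix.fromBlocks_multiply,
    Matrix.transpose_transpose, Matrix.transpose_transpose,
    hL1, hL2, hL3, hL4]
end
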